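/- For positive real a, the integral ∫₀^∞ x^μ K_ν(a x) dx equals 2^(μ-1) a^(-μ-1) Γ((1+μ+ν)/2) Γ((1+μ-ν)/2), whenever μ+1 > |ν| (so both Gamma arguments are positive). -/

import Mathlib

open MeasureTheory Real Set

/-- The modified Bessel function of the second kind `K_ν(x)`, via its
integral representation (valid for `x > 0`). -/
noncomputable def besselK (ν x : ℝ) : ℝ :=
  ∫ t in Set.Ioi (0 : ℝ), Real.exp (-x * Real.cosh t) * Real.cosh (ν * t)


lemma realBeta {p q : ℝ} (hp : 0 < p) (hq : 0 < q) :
    ∫ x in (0:ℝ)..1, x ^ (p-1) * (1-x) ^ (q-1)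
      = Real.Gamma p * Real.Gamma q / Real.Gamma (p+q) := by
  have key : Complex.betaIntegral p q
      = ((∫ x in (0:ℝ)..1, x ^ (p-1) * (1-x) ^ (q-1) : ℝ) : ℂ) := by
    rw [Complex.betaIntegral, ← intervalIntegral.integral_ofReal]
    rw [intervalIntegral.integral_of_le (by norm_num : (0:ℝ) ≤ 1),
        intervalIntegral.integral_of_le (by norm_num : (0:ℝ) ≤ 1)]
    refine setIntegral_congr_fun measurableSet_Ioc fun x hx => ?_
    have hx0 : (0:ℝ) ≤ x := hx.1.le
    have hx1 : (0:ℝ) ≤ 1 - x := by linarith [hx.2]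
    rw [Complex.ofReal_mul, Complex.ofReal_cpow hx0, Complex.ofReal_cpow hx1]
    push_cast
    ring
  have h := Complex.Gamma_mul_Gamma_eq_betaIntegral
      (s := (p:ℂ)) (t := (q:ℂ)) (by simpa using hp) (by simpa using hq)
  rw [key, ← Complex.ofReal_add, Complex.Gamma_ofReal, Complex.Gamma_ofReal,
      Complex.Gamma_ofReal, ← Complex.ofReal_mul, ← Complex.ofReal_mul] at h
  have h' := Complex.ofReal_injective h
  have hΓ : Real.Gamma (p+q) ≠ 0 := (Real.Gamma_pos_of_pos (by linarith)).ne'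
  field_simp at h' ⊢
  linarith [h']

lemma Tsub (p q : ℝ) :
    ∫ t in Ioi (0:ℝ), exp ((q - p) * t) * cosh t ^ (-(p+q))
      = 2^(p+q-1) * ∫ x in Ioo (0:ℝ) (1/2:ℝ), x^(p-1)*(1-x)^(q-1) := by
  set f : ℝ → ℝ := fun t => exp (-2*t) / (1 + exp (-2*t)) with hf
  set f' : ℝ → ℝ := fun t => -2 * exp (-2*t) / (1 + exp (-2*t)) ^ 2 with hf'
  have hden : ∀ t : ℝ, (0:ℝ) < 1 + exp (-2*t) := fun t => by positivity
  have hderiv : ∀ t ∈ Ioi (0:ℝ), HasDerivWithinAt f (f' t) (Ioi 0) t := by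
    intro t ht
    have hE : HasDerivAt (fun t : ℝ => exp (-2*t)) (exp (-2*t) * -2) t := by
      have : HasDerivAt (fun t : ℝ => -2*t) (-2) t := by
        simpa using (hasDerivAt_id t).const_mul (-2:ℝ)
      exact this.exp
    have h := (hE.div ((hasDerivAt_const t (1:ℝ)).add hE) (hden t).ne')
    have heq : (exp (-2*t) * -2 * (1 + exp (-2*t)) - exp (-2*t) * (0 + exp (-2*t) * -2))
        / (1 + exp (-2*t)) ^ 2 = f' t := by
      simp only [hf']
      rw [div_eq_div_iff (pow_ne_zero 2 (hden t).ne') (pow_ne_zero 2 (hden t).ne')]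
      ring
    exact (heq ▸ h).hasDerivWithinAt
  have hinj : InjOn f (Ioi 0) := by
    intro t1 _ t2 _ h
    simp only [hf] at h
    rw [div_eq_div_iff (hden t1).ne' (hden t2).ne'] at h
    have : exp (-2*t1) = exp (-2*t2) := by nlinarith [exp_pos (-2*t1), exp_pos (-2*t2)]
    have := Real.exp_injective this
    linarith
  have himg : f '' Ioi 0 = Ioo (0:ℝ) (1/2) := by
    ext x
    constructor
    · rintro ⟨t, ht, rfl⟩
      have hE1 : exp (-2*t) < 1 := by
        rw [exp_lt_one_iff]; simp only [mem_Ioi] at ht; linarith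
      have hE0 : 0 < exp (-2*t) := exp_pos _
      constructor
      · positivity
      · rw [div_lt_iff₀ (hden t)]; linarith
    · rintro ⟨hx0, hx1⟩
      refine ⟨-(1/2) * Real.log (x/(1-x)), ?_, ?_⟩
      · have h1 : x / (1-x) < 1 := by
          rw [div_lt_one (by linarith)]; linarith
        have h0 : 0 < x / (1-x) := div_pos hx0 (by linarith)
        have := Real.log_neg h0 h1
        simp only [mem_Ioi]; nlinarith
      · have h0 : 0 < x / (1-x) := div_pos hx0 (by linarith)
        show exp (-2 * (-(1/2) * Real.log (x/(1-x))))
            / (1 + exp (-2 * (-(1/2) * Real.log (x/(1-x))))) = x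
        rw [show -2 * (-(1/2) * Real.log (x/(1-x))) = Real.log (x/(1-x)) by ring,
          Real.exp_log h0]
        have hne : (1:ℝ) - x ≠ 0 := by linarith
        have hd : (1-x) * (1 + x/(1-x)) = 1 := by field_simp; ring
        rw [div_div, hd, div_one]
  have key : ∀ t ∈ Ioi (0:ℝ),
      |f' t| • (2^(p+q-1) * ((f t)^(p-1) * (1-f t)^(q-1)))
        = exp ((q - p) * t) * cosh t ^ (-(p+q)) := by
    intro t _
    set E := exp (-2*t) with hE
    have hE0 : 0 < E := exp_pos _
    have hfv : f t = E / (1+E) := rfl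
    have h1f : 1 - f t = 1 / (1+E) := by
      rw [hfv]; field_simp; ring
    have habs : |f' t| = 2 * E / (1+E)^2 := by
      simp only [hf']
      rw [abs_div, abs_of_pos (by positivity : (0:ℝ) < (1+exp (-2*t))^2),
        abs_of_neg (by nlinarith [exp_pos (-2*t)] : -2*exp (-2*t) < 0)]
      rw [← hE]; ring
    have hcosh : 1 + E = 2 * exp (-t) * cosh t := by
      have h1t : exp (-t) * exp t = 1 := by rw [← Real.exp_add]; simp
      have hEE : E = exp (-t) * exp (-t) := by rw [hE, ← Real.exp_add]; ring_nf
      rw [Real.cosh_eq, hEE]; field_simp; nlinarith [h1t]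
    set L := Real.log (1+E) with hLdef
    have hexpL : exp L = 1 + E := Real.exp_log (hden t)
    have hL : L = Real.log 2 + (-t) + Real.log (cosh t) := by
      rw [hLdef, hcosh, Real.log_mul (by positivity) (Real.cosh_pos t).ne',
        Real.log_mul (by norm_num) (exp_pos (-t)).ne', Real.log_exp]
    have e1 : (f t)^(p-1) = exp ((-2*t - L) * (p-1)) := by
      rw [hfv, Real.rpow_def_of_pos (by positivity),
        Real.log_div hE0.ne' (hden t).ne', hE, Real.log_exp, ← hE, ← hLdef]
    have e2 : (1 - f t)^(q-1) = exp ((-L) * (q-1)) := by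
      rw [h1f, Real.rpow_def_of_pos (by positivity), one_div,
        Real.log_inv, ← hLdef]
    have e3 : cosh t ^ (-(p+q)) = exp (Real.log (cosh t) * (-(p+q))) :=
      Real.rpow_def_of_pos (Real.cosh_pos t) _
    have e4 : (2:ℝ)^(p+q-1) = exp (Real.log 2 * (p+q-1)) :=
      Real.rpow_def_of_pos (by norm_num) _
    have e6 : ((1+E):ℝ)^2 = exp (L + L) := by
      rw [Real.exp_add, hexpL, sq]
    have e7 : 2 * E = exp (Real.log 2 + -2*t) := by
      rw [Real.exp_add, Real.exp_log two_pos, hE]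
    rw [smul_eq_mul, habs, e1, e2, e3, e4, e6, e7]
    simp only [← Real.exp_add, ← Real.exp_sub, div_mul_eq_mul_div, ← Real.exp_sub]
    rw [Real.exp_eq_exp, hL]
    ring
  rw [← himg, ← integral_const_mul,
    integral_image_eq_integral_abs_deriv_smul measurableSet_Ioi hderiv hinj
      (fun x => 2^(p+q-1) * (x^(p-1)*(1-x)^(q-1)))]
  exact (setIntegral_congr_fun measurableSet_Ioi key).symm

lemma Taux {m c : ℝ} (hm : 0 < m) (hc : c < m) :
    IntegrableOn (fun t => exp (c*t) * cosh t ^ (-m)) (Ioi (0:ℝ)) := by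
  have hbig : Integrable (fun t => (2:ℝ)^m * exp (-(m - c) * t)) (volume.restrict (Ioi (0:ℝ))) :=
    (exp_neg_integrableOn_Ioi 0 (by linarith : 0 < m - c)).const_mul _
  refine hbig.mono ?_ ?_
  · apply Continuous.aestronglyMeasurable
    exact (Real.continuous_exp.comp (continuous_const.mul continuous_id)).mul
      (Real.continuous_cosh.rpow_const (fun t => Or.inl (Real.cosh_pos t).ne'))
  · filter_upwards [ae_restrict_mem measurableSet_Ioi] with t ht
    simp only [mem_Ioi] at ht
    have h1 : exp t / 2 ≤ cosh t := by
      rw [Real.cosh_eq]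
      have := (exp_pos (-t)).le
      gcongr
      linarith [exp_pos (-t)]
    have h2 : cosh t ^ (-m) ≤ (exp t / 2) ^ (-m) :=
      Real.rpow_le_rpow_of_nonpos (by positivity) h1 (by linarith)
    have h3 : (exp t / 2 : ℝ) ^ (-m) = 2^m * exp (-m * t) := by
      rw [div_rpow (exp_pos t).le (by norm_num), ← Real.exp_mul,
        Real.rpow_neg (by norm_num : (0:ℝ) ≤ 2), div_eq_mul_inv, inv_inv,
        show t * (-m) = -m*t by ring]
      ring
    have hpos : (0:ℝ) < exp (c*t) * cosh t ^ (-m) := by positivity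
    rw [Real.norm_eq_abs, Real.norm_eq_abs, abs_of_pos hpos,
      abs_of_pos (by positivity)]
    calc exp (c*t) * cosh t ^ (-m) ≤ exp (c*t) * (2^m * exp (-m * t)) := by
          rw [← h3]; exact mul_le_mul_of_nonneg_left h2 (exp_pos _).le
      _ = 2^m * exp (-(m - c) * t) := by
          rw [show exp (c*t) * (2^m * exp (-m*t)) = 2^m * (exp (c*t) * exp (-m*t)) by ring,
            ← Real.exp_add]
          congr 1
          ring

lemma IXint {b μ : ℝ} (hb : 0 < b) (hμ : -1 < μ) :
    IntegrableOn (fun x => x ^ μ * exp (-b * x)) (Ioi (0:ℝ)) := by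
  have h0 := Real.GammaIntegral_convergent (by linarith : 0 < μ + 1)
  have h1 : IntegrableOn (fun x => exp (-(b*x)) * (b*x) ^ (μ+1-1)) (Ioi (0:ℝ)) := by
    have := (integrableOn_Ioi_comp_mul_left_iff
      (fun x => exp (-x) * x ^ (μ+1-1)) 0 hb).mpr
    simp only [mul_zero] at this
    exact this h0
  have h2 := h1.const_mul (b ^ (-μ))
  refine IntegrableOn.congr_fun h2 (fun x hx => ?_) measurableSet_Ioi
  simp only [mem_Ioi] at hx
  rw [add_sub_cancel_right, mul_rpow hb.le hx.le, Real.rpow_neg hb.le]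
  rw [neg_mul]
  field_simp
lemma IXval {b μ : ℝ} (hb : 0 < b) (hμ : -1 < μ) :
    ∫ x in Ioi (0:ℝ), x ^ μ * exp (-b * x) = b ^ (-(μ+1)) * Real.Gamma (μ+1) := by
  have h := integral_rpow_mul_exp_neg_mul_rpow (p := 1) (q := μ) (b := b)
    one_pos hμ hb
  simp only [Real.rpow_one, div_one, one_mul] at h
  rw [h]
  ring

lemma Tval {μ ν : ℝ} (hμν : |ν| < μ + 1) :
    ∫ t in Ioi (0:ℝ), cosh (ν*t) * cosh t ^ (-(μ+1))
      = 2^(μ-1) * (Real.Gamma ((1+μ+ν)/2) * Real.Gamma ((1+μ-ν)/2)) / Real.Gamma (μ+1) := by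
  obtain ⟨hν1, hν2⟩ := abs_lt.mp hμν
  set p : ℝ := (1+μ-ν)/2 with hpdef
  set q : ℝ := (1+μ+ν)/2 with hqdef
  have hp : 0 < p := by rw [hpdef]; linarith
  have hq : 0 < q := by rw [hqdef]; linarith
  have hm : (0:ℝ) < μ + 1 := lt_of_le_of_lt (abs_nonneg ν) hμν
  have hqp : q - p = ν := by rw [hpdef, hqdef]; ring
  have hpq : p + q = μ + 1 := by rw [hpdef, hqdef]; ring
  -- split cosh
  have hsplit : ∫ t in Ioi (0:ℝ), cosh (ν*t) * cosh t ^ (-(μ+1))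
      = (1/2) * (∫ t in Ioi (0:ℝ), exp (ν*t) * cosh t ^ (-(μ+1)))
        + (1/2) * (∫ t in Ioi (0:ℝ), exp (-ν*t) * cosh t ^ (-(μ+1))) := by
    rw [← integral_const_mul, ← integral_const_mul,
      ← integral_add (((Taux hm hν2).const_mul _))
        (((Taux hm (by linarith : -ν < μ+1)).const_mul _))]
    refine setIntegral_congr_fun measurableSet_Ioi (fun t _ => ?_)
    rw [Real.cosh_eq, neg_mul]
    ring
  -- the two halves via Tsub
  have T1 : ∫ t in Ioi (0:ℝ), exp (ν*t) * cosh t ^ (-(μ+1))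
      = 2^(μ+1-1) * ∫ x in Ioo (0:ℝ) (1/2:ℝ), x^(p-1)*(1-x)^(q-1) := by
    have h := Tsub p q
    rw [hqp, hpq] at h
    exact h
  have T2 : ∫ t in Ioi (0:ℝ), exp (-ν*t) * cosh t ^ (-(μ+1))
      = 2^(μ+1-1) * ∫ x in Ioo (0:ℝ) (1/2:ℝ), x^(q-1)*(1-x)^(p-1) := by
    have h := Tsub q p
    rw [show p - q = -ν by rw [← hqp]; ring, show q + p = μ+1 by rw [← hpq]; ring] at h
    exact h
  -- reflection for the second piece
  have hrefl : ∫ x in Ioo (0:ℝ) (1/2:ℝ), x^(q-1)*(1-x)^(p-1)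
      = ∫ y in Ioo (1/2:ℝ) 1, y^(p-1)*(1-y)^(q-1) := by
    have himg : (fun y : ℝ => 1 - y) '' Ioo (1/2:ℝ) 1 = Ioo (0:ℝ) (1/2) := by
      ext x
      constructor
      · rintro ⟨y, ⟨h1, h2⟩, rfl⟩
        refine ⟨?_, ?_⟩
        · show (0:ℝ) < 1 - y; linarith
        · show (1:ℝ) - y < 1/2; linarith
      · rintro ⟨h1, h2⟩
        exact ⟨1 - x, ⟨by linarith, by linarith⟩, by ring⟩
    have hderiv : ∀ y ∈ Ioo (1/2:ℝ) 1,
        HasDerivWithinAt (fun y : ℝ => 1 - y) (-1 : ℝ) (Ioo (1/2:ℝ) 1) y := by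
      intro y _
      exact ((hasDerivAt_id' y).const_sub (1:ℝ)).hasDerivWithinAt
    have hinj : InjOn (fun y : ℝ => 1 - y) (Ioo (1/2:ℝ) 1) := by
      intro y1 _ y2 _ h
      simp only at h
      linarith
    rw [← himg, integral_image_eq_integral_abs_deriv_smul measurableSet_Ioo hderiv hinj
      (fun x => x^(q-1)*(1-x)^(p-1))]
    refine setIntegral_congr_fun measurableSet_Ioo (fun y _ => ?_)
    simp only [abs_neg, abs_one, one_smul, sub_sub_cancel]
    ring
  -- interval integrability
  have cont1 : ∀ r : ℝ, ContinuousOn (fun x : ℝ => (1-x)^r) (uIcc 0 (1/2:ℝ)) := by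
    intro r
    apply ContinuousOn.rpow_const ((continuous_const.sub continuous_id).continuousOn)
    intro x hx
    rw [uIcc_of_le (by norm_num : (0:ℝ) ≤ 1/2)] at hx
    left
    have hx2 : x ≤ 1/2 := hx.2
    intro h0
    simp only [Pi.sub_apply, id_eq] at h0
    have : x = 1 := by linarith
    linarith
  have II1 : IntervalIntegrable (fun x : ℝ => x^(p-1)*(1-x)^(q-1)) volume 0 (1/2) :=
    (intervalIntegral.intervalIntegrable_rpow' (by linarith : (-1:ℝ) < p-1)).mul_continuousOn
      (cont1 (q-1))
  have II2' : IntervalIntegrable (fun x : ℝ => x^(q-1)*(1-x)^(p-1)) volume 0 (1/2) :=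
    (intervalIntegral.intervalIntegrable_rpow' (by linarith : (-1:ℝ) < q-1)).mul_continuousOn
      (cont1 (p-1))
  have II2 : IntervalIntegrable (fun x : ℝ => x^(p-1)*(1-x)^(q-1)) volume (1/2) 1 := by
    have h1 := ((IntervalIntegrable.iff_comp_neg (by simp)).mp II2').comp_sub_right 1
    norm_num at h1
    have heq : (fun x : ℝ => (1-x)^(q-1)*x^(p-1))
        = fun x : ℝ => x^(p-1)*(1-x)^(q-1) := funext fun x => mul_comm _ _
    rw [heq] at h1
    exact h1.symm
  -- assemble
  have hIoo1 : ∫ x in Ioo (0:ℝ) (1/2:ℝ), x^(p-1)*(1-x)^(q-1)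
      = ∫ x in (0:ℝ)..(1/2), x^(p-1)*(1-x)^(q-1) := by
    rw [intervalIntegral.integral_of_le (by norm_num : (0:ℝ) ≤ 1/2),
      integral_Ioc_eq_integral_Ioo]
  have hIoo2 : ∫ x in Ioo (1/2:ℝ) 1, x^(p-1)*(1-x)^(q-1)
      = ∫ x in (1/2:ℝ)..1, x^(p-1)*(1-x)^(q-1) := by
    rw [intervalIntegral.integral_of_le (by norm_num : (1/2:ℝ) ≤ 1),
      integral_Ioc_eq_integral_Ioo]
  have hadj := intervalIntegral.integral_add_adjacent_intervals II1 II2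
  have hbeta := realBeta hp hq
  rw [hsplit, T1, T2, hrefl, hIoo1, hIoo2]
  rw [show (2:ℝ)^(μ+1-1) = 2^(μ-1) * 2 by
    rw [← Real.rpow_add_one (by norm_num : (2:ℝ) ≠ 0) (μ-1)]; ring_nf]
  rw [show (1/2:ℝ) * (2^(μ-1) * 2 * ∫ x in (0:ℝ)..(1/2), x^(p-1)*(1-x)^(q-1))
      + (1/2:ℝ) * (2^(μ-1) * 2 * ∫ x in (1/2:ℝ)..1, x^(p-1)*(1-x)^(q-1))
      = 2^(μ-1) * ((∫ x in (0:ℝ)..(1/2), x^(p-1)*(1-x)^(q-1))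
        + ∫ x in (1/2:ℝ)..1, x^(p-1)*(1-x)^(q-1)) by ring]
  rw [hadj, hbeta, hpq]
  rw [hpdef, hqdef]
  ring

lemma TauxCosh {μ ν : ℝ} (hμν : |ν| < μ + 1) :
    IntegrableOn (fun t => cosh (ν*t) * cosh t ^ (-(μ+1))) (Ioi (0:ℝ)) := by
  obtain ⟨hν1, hν2⟩ := abs_lt.mp hμν
  have hm : (0:ℝ) < μ + 1 := lt_of_le_of_lt (abs_nonneg ν) hμν
  have h := (((Taux hm hν2).const_mul (1/2)).add
    ((Taux hm (by linarith : -ν < μ+1)).const_mul (1/2)))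
  refine IntegrableOn.congr_fun h (fun t _ => ?_) measurableSet_Ioi
  simp only [Pi.add_apply]
  rw [show Real.cosh (ν*t) = (exp (ν*t) + exp (-ν*t))/2 by rw [Real.cosh_eq, ← neg_mul]]
  ring

/-- Gradshteyn–Ryzhik 6.561.16:
`∫₀^∞ x^μ K_ν(a x) dx = 2^(μ-1) a^(-μ-1) Γ((1+μ+ν)/2) Γ((1+μ-ν)/2)`
for `a > 0` and `μ + 1 > |ν|`. -/
theorem besselK_integral_moment (a μ ν : ℝ) (ha : 0 < a) (hμν : μ + 1 > |ν|) :
    ∫ x in Set.Ioi (0 : ℝ), x ^ μ * besselK ν (a * x)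
      = 2 ^ (μ - 1) * a ^ (-μ - 1) *
        Real.Gamma ((1 + μ + ν) / 2) * Real.Gamma ((1 + μ - ν) / 2) := by
  have hν : |ν| < μ + 1 := hμν
  have hμ : -1 < μ := by have := abs_nonneg ν; linarith
  have hm : (0:ℝ) < μ + 1 := by linarith
  set f : ℝ → ℝ → ℝ := fun x t => x ^ μ * (exp (-(a*x) * cosh t) * cosh (ν*t)) with hfdef
  have hGpos : 0 < Real.Gamma (μ+1) := Real.Gamma_pos_of_pos hm
  -- inner x-integral value (valid for all t)
  have hinner : ∀ t : ℝ, ∫ x in Ioi (0:ℝ), f x t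
      = Real.Gamma (μ+1) * a^(-(μ+1)) * (cosh (ν*t) * cosh t ^ (-(μ+1))) := by
    intro t
    have hb : 0 < a * cosh t := by positivity
    have h1 : ∫ x in Ioi (0:ℝ), f x t
        = (∫ x in Ioi (0:ℝ), x ^ μ * exp (-(a * cosh t) * x)) * cosh (ν*t) := by
      rw [← integral_mul_const]
      refine setIntegral_congr_fun measurableSet_Ioi (fun x _ => ?_)
      rw [hfdef]
      simp only
      rw [show -(a * cosh t) * x = -(a*x) * cosh t by ring]
      ring
    rw [h1, IXval hb hμ, mul_rpow ha.le (Real.cosh_pos t).le]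
    ring
  -- measurability on the product
  have hmeas : AEStronglyMeasurable (Function.uncurry f)
      ((volume.restrict (Ioi (0:ℝ))).prod (volume.restrict (Ioi (0:ℝ)))) := by
    have hc : Continuous fun z : ℝ × ℝ => exp (-(a * z.1) * Real.cosh z.2) * Real.cosh (ν * z.2) := by
      fun_prop
    exact ((measurable_fst.pow_const μ).mul hc.measurable).aestronglyMeasurable
  have hint : Integrable (Function.uncurry f)
      ((volume.restrict (Ioi (0:ℝ))).prod (volume.restrict (Ioi (0:ℝ)))) := by
    rw [integrable_prod_iff' hmeas]
    constructor
    · refine Filter.Eventually.of_forall (fun t => ?_)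
      have hb : 0 < a * cosh t := by positivity
      have h := (IXint hb hμ).mul_const (cosh (ν*t))
      refine IntegrableOn.congr_fun h (fun x _ => ?_) measurableSet_Ioi
      simp only [Function.uncurry, hfdef]
      rw [show -(a * cosh t) * x = -(a*x) * cosh t by ring]
      ring
    · have h := (TauxCosh hν).const_mul (Real.Gamma (μ+1) * a^(-(μ+1)))
      refine IntegrableOn.congr_fun h (fun t ht => ?_) measurableSet_Ioi
      have e0 : Real.Gamma (μ+1) * a^(-(μ+1)) * (cosh (ν*t) * cosh t ^ (-(μ+1)))
          = ∫ x in Ioi (0:ℝ), ‖Function.uncurry f (x,t)‖ := by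
        rw [← hinner t]
        refine setIntegral_congr_fun measurableSet_Ioi (fun x hx => ?_)
        simp only [mem_Ioi] at hx
        have hnn : 0 ≤ f x t := by
          rw [hfdef]
          have := Real.rpow_nonneg hx.le μ
          positivity
        rw [Real.norm_eq_abs, Function.uncurry, abs_of_nonneg hnn]
      refine Eq.trans ?_ e0
      ring
  calc ∫ x in Ioi (0:ℝ), x ^ μ * besselK ν (a * x)
      = ∫ x in Ioi (0:ℝ), ∫ t in Ioi (0:ℝ), f x t := by
        refine setIntegral_congr_fun measurableSet_Ioi (fun x _ => ?_)
        rw [besselK, ← integral_const_mul]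
    _ = ∫ t in Ioi (0:ℝ), ∫ x in Ioi (0:ℝ), f x t := integral_integral_swap hint
    _ = ∫ t in Ioi (0:ℝ), Real.Gamma (μ+1) * a^(-(μ+1))
          * (cosh (ν*t) * cosh t ^ (-(μ+1))) :=
        setIntegral_congr_fun measurableSet_Ioi (fun t _ => hinner t)
    _ = Real.Gamma (μ+1) * a^(-(μ+1)) * (2^(μ-1)
          * (Real.Gamma ((1+μ+ν)/2) * Real.Gamma ((1+μ-ν)/2)) / Real.Gamma (μ+1)) := by
        rw [integral_const_mul, Tval hν]
    _ = 2 ^ (μ - 1) * a ^ (-μ - 1) * Real.Gamma ((1 + μ + ν) / 2)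
          * Real.Gamma ((1 + μ - ν) / 2) := by
        rw [show (-μ - 1 : ℝ) = -(μ+1) by ring]
        field_simp
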